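/- (FKG inequality for the interface measure.) For any potential V in the class 𝒞 and any N ≥ 2, if f, g : Ω_N → ℝ are bounded measurable functions that are increasing with respect to the coordinatewise partial order (x ≤ y iff x_k ≤ y_k for all k ∈ {0,…,N}), then π_N(fg) ≥ π_N(f)·π_N(g). -/

import Mathlib

open MeasureTheory Filter Real
open scoped ENNReal NNReal

noncomputable section

/-- The class 𝒞 of potentials: convex, at most polynomial growth, non-affine
(the asymptotic slopes at `+∞` and `-∞`, taken in the extended reals, differ). -/
structure InClassC (V : ℝ → ℝ) : Prop where
  convex : ConvexOn ℝ Set.univ V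
  growth : ∃ C > (0 : ℝ), ∃ K : ℝ, 1 ≤ K ∧ ∀ x : ℝ, |V x| ≤ C * (1 + |x|) ^ K
  slopes : ∃ vm vp : EReal,
    Tendsto (fun x : ℝ => ((V x / x : ℝ) : EReal)) atBot (nhds vm) ∧
    Tendsto (fun x : ℝ => ((V x / x : ℝ) : EReal)) atTop (nhds vp) ∧
    vm < vp

/-- Configuration in `Ω_N` built from the `N-1` inner coordinates: coordinates
`1,…,N-1` are free, all others (in particular `0` and `N`) vanish. -/
def conf (N : ℕ) (y : Fin (N - 1) → ℝ) : ℕ → ℝ := fun k =>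
  if h : 1 ≤ k ∧ k ≤ N - 1 then y ⟨k - 1, by omega⟩ else 0

/-- The Hamiltonian `H(x) = Σ_{k=1}^N V(x_k - x_{k-1})`. -/
def Ham (V : ℝ → ℝ) (N : ℕ) (x : ℕ → ℝ) : ℝ :=
  ∑ k ∈ Finset.range N, V (x (k + 1) - x k)

/-- Normalisation constant `Z_N`. -/
def Zpart (V : ℝ → ℝ) (N : ℕ) : ℝ :=
  ∫ y : Fin (N - 1) → ℝ, Real.exp (-(Ham V N (conf N y)))

/-- The Gibbs measure `π_N` on `Ω_N`, viewed as a measure on configurations `ℕ → ℝ`: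
the inner coordinates have density `e^{-H}/Z_N` w.r.t. Lebesgue measure. -/
def piN (V : ℝ → ℝ) (N : ℕ) : Measure (ℕ → ℝ) :=
  Measure.map (conf N)
    (volume.withDensity fun y : Fin (N - 1) → ℝ =>
      ENNReal.ofReal (Real.exp (-(Ham V N (conf N y))) / Zpart V N))

lemma fkg_alg {p q P Q : ℝ≥0∞} (hp : p ≤ P) (hq : q ≤ P) (hpq : p * q ≤ P * Q) :
    p + q ≤ P + Q := by
  rcases eq_top_or_lt_top P with hP | hP
  · rw [hP, top_add]; exact le_top
  rcases eq_or_ne P 0 with hP0 | hP0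
  · subst hP0
    simp only [le_zero_iff] at hp hq
    simp [hp, hq]
  rcases eq_top_or_lt_top Q with hQ | hQ
  · rw [hQ, add_top]; exact le_top
  lift P to ℝ≥0 using hP.ne
  lift Q to ℝ≥0 using hQ.ne
  lift p to ℝ≥0 using (hp.trans_lt hP).ne
  lift q to ℝ≥0 using (hq.trans_lt hP).ne
  rw [← ENNReal.coe_mul, ← ENNReal.coe_mul, ENNReal.coe_le_coe] at hpq
  rw [ENNReal.coe_le_coe] at hp hq
  rw [← ENNReal.coe_add, ← ENNReal.coe_add, ENNReal.coe_le_coe]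
  have hPpos : (0 : ℝ) < P := by
    rcases (show (0:ℝ≥0) ≤ P from zero_le).lt_or_eq with h | h
    · exact_mod_cast h
    · exact absurd h.symm (by exact_mod_cast hP0)
  rw [← NNReal.coe_le_coe] at hp hq hpq ⊢
  push_cast at hp hq hpq ⊢
  have h1 : ((p : ℝ) + q) * P ≤ ((P : ℝ) + Q) * P := by
    nlinarith [mul_nonneg (sub_nonneg.2 hp) (sub_nonneg.2 hq)]
  exact le_of_mul_le_mul_right h1 hPpos

lemma fkg_diag_null : (volume : Measure (ℝ × ℝ)) {p : ℝ × ℝ | p.1 = p.2} = 0 := by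
  rw [Measure.volume_eq_prod, Measure.prod_apply (measurableSet_eq_fun measurable_fst measurable_snd)]
  have : ∀ x : ℝ, (Prod.mk x ⁻¹' {p : ℝ × ℝ | p.1 = p.2}) = {x} := by
    intro x; ext y; simp [eq_comm]
  simp [this]

lemma fkg_dim1 (α β γ δ : ℝ → ℝ≥0∞) (hα : Measurable α) (hβ : Measurable β)
    (hγ : Measurable γ) (hδ : Measurable δ)
    (h : ∀ s t : ℝ, α s * β t ≤ γ (max s t) * δ (min s t)) :
    (∫⁻ s, α s) * (∫⁻ t, β t) ≤ (∫⁻ s, γ s) * (∫⁻ t, δ t) := by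
  have hT : MeasurableSet {p : ℝ × ℝ | p.2 < p.1} :=
    measurableSet_lt measurable_snd measurable_fst
  have hT' : MeasurableSet {p : ℝ × ℝ | p.1 < p.2} :=
    measurableSet_lt measurable_fst measurable_snd
  have hswap : MeasurePreserving Prod.swap (volume : Measure (ℝ × ℝ)) volume := by
    rw [Measure.volume_eq_prod]; exact Measure.measurePreserving_swap
  have key : ∀ F G : ℝ → ℝ≥0∞, Measurable F → Measurable G →
      (∫⁻ s, F s) * (∫⁻ t, G t) =
        ∫⁻ p in {p : ℝ × ℝ | p.2 < p.1}, (F p.1 * G p.2 + F p.2 * G p.1) := by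
    intro F G hF hG
    have hFG : Measurable fun p : ℝ × ℝ => F p.1 * G p.2 :=
      (hF.comp measurable_fst).mul (hG.comp measurable_snd)
    have h1 : (∫⁻ s, F s) * (∫⁻ t, G t) = ∫⁻ p : ℝ × ℝ, F p.1 * G p.2 := by
      rw [Measure.volume_eq_prod, lintegral_prod_mul hF.aemeasurable hG.aemeasurable]
    have h2 : (∫⁻ p : ℝ × ℝ, F p.1 * G p.2) =
        (∫⁻ p in {p : ℝ × ℝ | p.2 < p.1}, F p.1 * G p.2) +
          ∫⁻ p in {p : ℝ × ℝ | p.2 < p.1}ᶜ, F p.1 * G p.2 :=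
      (lintegral_add_compl _ hT).symm
    have hae : ({p : ℝ × ℝ | p.2 < p.1}ᶜ : Set (ℝ × ℝ)) =ᵐ[volume] ({p : ℝ × ℝ | p.1 < p.2} : Set (ℝ × ℝ)) := by
      rw [MeasureTheory.ae_eq_set]
      constructor
      · refine measure_mono_null ?_ fkg_diag_null
        intro p hp
        have h1 : ¬ p.2 < p.1 := hp.1
        have h2 : ¬ p.1 < p.2 := hp.2
        show p.1 = p.2
        exact le_antisymm (not_lt.1 h1) (not_lt.1 h2)
      · refine measure_mono_null ?_ fkg_diag_null
        intro p hp
        have h1 : p.1 < p.2 := hp.1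
        have h2 : p.2 < p.1 := Set.notMem_compl_iff.mp hp.2
        exact absurd (h1.trans h2) (lt_irrefl _)
    have h3 : (∫⁻ p in {p : ℝ × ℝ | p.2 < p.1}ᶜ, F p.1 * G p.2) =
        ∫⁻ p in {p : ℝ × ℝ | p.1 < p.2}, F p.1 * G p.2 := by
      rw [Measure.restrict_congr_set hae]
    have h4 : (∫⁻ p in {p : ℝ × ℝ | p.1 < p.2}, F p.1 * G p.2) =
        ∫⁻ p in {p : ℝ × ℝ | p.2 < p.1}, F p.2 * G p.1 := by
      have := hswap.setLIntegral_comp_preimage (s := {p : ℝ × ℝ | p.1 < p.2}) hT'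
        (f := fun p : ℝ × ℝ => F p.1 * G p.2) hFG
      have hpre : Prod.swap ⁻¹' {p : ℝ × ℝ | p.1 < p.2} = {p : ℝ × ℝ | p.2 < p.1} := by
        ext p; simp [Prod.swap]
      rw [hpre] at this
      exact this.symm
    rw [h1, h2, h3, h4]
    exact (lintegral_add_left hFG _).symm
  rw [key α β hα hβ, key γ δ hγ hδ]
  refine setLIntegral_mono (((hγ.comp measurable_fst).mul (hδ.comp measurable_snd)).add
    ((hγ.comp measurable_snd).mul (hδ.comp measurable_fst))) ?_
  intro p hp
  have hple : p.2 ≤ p.1 := le_of_lt hp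
  have hp1 : α p.1 * β p.2 ≤ γ p.1 * δ p.2 := by
    have := h p.1 p.2
    rwa [max_eq_left hple, min_eq_right hple] at this
  have hp2 : α p.2 * β p.1 ≤ γ p.1 * δ p.2 := by
    have := h p.2 p.1
    rwa [max_eq_right hple, min_eq_left hple] at this
  have hprod : (α p.1 * β p.2) * (α p.2 * β p.1) ≤ (γ p.1 * δ p.2) * (γ p.2 * δ p.1) := by
    have e1 := h p.1 p.1
    have e2 := h p.2 p.2
    rw [max_self, min_self] at e1 e2
    calc (α p.1 * β p.2) * (α p.2 * β p.1) = (α p.1 * β p.1) * (α p.2 * β p.2) := by ring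
      _ ≤ (γ p.1 * δ p.1) * (γ p.2 * δ p.2) := mul_le_mul' e1 e2
      _ = (γ p.1 * δ p.2) * (γ p.2 * δ p.1) := by ring
  exact fkg_alg hp1 hp2 hprod

lemma fkg_insertNth_sup {m : ℕ} (i : Fin (m + 1)) (s t : ℝ) (x y : Fin m → ℝ) :
    (Fin.insertNth (α := fun _ => ℝ) i (s ⊔ t) (x ⊔ y)) =
      (Fin.insertNth (α := fun _ => ℝ) i s x) ⊔ (Fin.insertNth (α := fun _ => ℝ) i t y) := by
  funext j
  refine Fin.succAboveCases i ?_ ?_ j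
  · simp [Fin.insertNth_apply_same, Pi.sup_apply, max_def]
  · intro k
    simp [Fin.insertNth_apply_succAbove, Pi.sup_apply]

lemma fkg_insertNth_inf {m : ℕ} (i : Fin (m + 1)) (s t : ℝ) (x y : Fin m → ℝ) :
    (Fin.insertNth (α := fun _ => ℝ) i (s ⊓ t) (x ⊓ y)) =
      (Fin.insertNth (α := fun _ => ℝ) i s x) ⊓ (Fin.insertNth (α := fun _ => ℝ) i t y) := by
  funext j
  refine Fin.succAboveCases i ?_ ?_ j
  · simp [Fin.insertNth_apply_same, Pi.inf_apply, min_def]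
  · intro k
    simp [Fin.insertNth_apply_succAbove, Pi.inf_apply]

lemma fkg_dim (m : ℕ) : ∀ α β γ δ : (Fin m → ℝ) → ℝ≥0∞,
    Measurable α → Measurable β → Measurable γ → Measurable δ →
    (∀ x y, α x * β y ≤ γ (x ⊔ y) * δ (x ⊓ y)) →
    (∫⁻ x, α x) * (∫⁻ x, β x) ≤ (∫⁻ x, γ x) * (∫⁻ x, δ x) := by
  induction m with
  | zero =>
    intro α β γ δ hα hβ hγ hδ h
    have hv : (volume : Measure (Fin 0 → ℝ)) = Measure.dirac (fun i => i.elim0) :=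
      Measure.volume_pi_eq_dirac _
    rw [hv, lintegral_dirac' _ hα, lintegral_dirac' _ hβ, lintegral_dirac' _ hγ,
      lintegral_dirac' _ hδ]
    have := h (fun i => i.elim0) (fun i => i.elim0)
    simpa using this
  | succ m ih =>
    intro α β γ δ hα hβ hγ hδ h
    set e := MeasurableEquiv.piFinSuccAbove (fun _ : Fin (m + 1) => ℝ) 0 with he
    have hmp : MeasurePreserving e volume volume :=
      MeasureTheory.volume_preserving_piFinSuccAbove _ 0
    have hmps : MeasurePreserving e.symm volume volume := hmp.symm
    have hesup : ∀ (s t : ℝ) (x y : Fin m → ℝ),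
        e.symm (max s t, x ⊔ y) = e.symm (s, x) ⊔ e.symm (t, y) := by
      intro s t x y
      show Fin.insertNth (α := fun _ => ℝ) 0 (s ⊔ t) (x ⊔ y) =
        Fin.insertNth (α := fun _ => ℝ) 0 s x ⊔ Fin.insertNth (α := fun _ => ℝ) 0 t y
      exact fkg_insertNth_sup 0 s t x y
    have heinf : ∀ (s t : ℝ) (x y : Fin m → ℝ),
        e.symm (min s t, x ⊓ y) = e.symm (s, x) ⊓ e.symm (t, y) := by
      intro s t x y
      show Fin.insertNth (α := fun _ => ℝ) 0 (s ⊓ t) (x ⊓ y) =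
        Fin.insertNth (α := fun _ => ℝ) 0 s x ⊓ Fin.insertNth (α := fun _ => ℝ) 0 t y
      exact fkg_insertNth_inf 0 s t x y
    set A : (Fin m → ℝ) → ℝ≥0∞ := fun x => ∫⁻ t : ℝ, α (e.symm (t, x)) with hA
    set B : (Fin m → ℝ) → ℝ≥0∞ := fun x => ∫⁻ t : ℝ, β (e.symm (t, x)) with hB
    set C : (Fin m → ℝ) → ℝ≥0∞ := fun x => ∫⁻ t : ℝ, γ (e.symm (t, x)) with hC
    set D : (Fin m → ℝ) → ℝ≥0∞ := fun x => ∫⁻ t : ℝ, δ (e.symm (t, x)) with hD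
    have hred : ∀ φ : (Fin (m + 1) → ℝ) → ℝ≥0∞, Measurable φ →
        (∫⁻ x, φ x) = ∫⁻ x, ∫⁻ t : ℝ, φ (e.symm (t, x)) := by
      intro φ hφ
      rw [← hmps.lintegral_comp hφ, Measure.volume_eq_prod]
      exact lintegral_prod_symm' (fun z : ℝ × (Fin m → ℝ) => φ (e.symm z))
        (hφ.comp hmps.measurable)
    have hφm : ∀ φ : (Fin (m + 1) → ℝ) → ℝ≥0∞, Measurable φ →
        Measurable fun x : Fin m → ℝ => ∫⁻ t : ℝ, φ (e.symm (t, x)) := by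
      intro φ hφ
      apply Measurable.lintegral_prod_left
      exact hφ.comp (hmps.measurable.comp (measurable_fst.prodMk measurable_snd))
    rw [hred α hα, hred β hβ, hred γ hγ, hred δ hδ]
    refine ih A B C D (hφm α hα) (hφm β hβ) (hφm γ hγ) (hφm δ hδ) ?_
    intro x y
    refine fkg_dim1 (fun s => α (e.symm (s, x))) (fun t => β (e.symm (t, y)))
      (fun s => γ (e.symm (s, x ⊔ y))) (fun s => δ (e.symm (s, x ⊓ y)))
      (hα.comp (hmps.measurable.comp (measurable_prodMk_right)))
      (hβ.comp (hmps.measurable.comp (measurable_prodMk_right)))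
      (hγ.comp (hmps.measurable.comp (measurable_prodMk_right)))
      (hδ.comp (hmps.measurable.comp (measurable_prodMk_right)))
      ?_
    intro s t
    rw [hesup s t x y, heinf s t x y]
    exact h _ _

lemma fkg_convex_pair {V : ℝ → ℝ} (hV : ConvexOn ℝ Set.univ V) {s t u v : ℝ}
    (huv : u + v = s + t) (h1 : min s t ≤ u) (h2 : u ≤ max s t) :
    V u + V v ≤ V s + V t := by
  set s' := min s t with hs'
  set t' := max s t with ht'
  have hst : V s' + V t' = V s + V t := by
    rcases le_total s t with h | h
    · rw [hs', ht', min_eq_left h, max_eq_right h]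
    · rw [hs', ht', min_eq_right h, max_eq_left h]; ring
  have hsum : s' + t' = s + t := by
    rcases le_total s t with h | h
    · rw [hs', ht', min_eq_left h, max_eq_right h]
    · rw [hs', ht', min_eq_right h, max_eq_left h]; ring
  rcases eq_or_lt_of_le (min_le_max (a := s) (b := t)) with heq | hlt
  · -- s' = t', so u = s' and v = t'
    have hu : u = s' := le_antisymm (h2.trans_eq heq.symm) h1
    have hv : v = t' := by
      have : v = s' + t' - u := by rw [hsum]; linarith
      rw [this, hu]; ring
    rw [hu, hv, hst]
  · set d := t' - s' with hd
    have hdpos : 0 < d := sub_pos.2 hlt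
    set lam := (u - s') / d with hlam
    have hlam0 : 0 ≤ lam := div_nonneg (by linarith) hdpos.le
    have hlam1 : lam ≤ 1 := by
      rw [hlam, div_le_one hdpos]; linarith
    have hu : u = (1 - lam) * s' + lam * t' := by
      rw [hlam]
      field_simp
      ring
    have hv : v = lam * s' + (1 - lam) * t' := by
      have hv' : v = s' + t' - u := by rw [hsum]; linarith
      rw [hv', hu]; ring
    have e1 := hV.2 (Set.mem_univ s') (Set.mem_univ t') (by linarith) hlam0
      (by ring : (1 - lam) + lam = 1)
    have e2 := hV.2 (Set.mem_univ s') (Set.mem_univ t') hlam0 (by linarith)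
      (by ring : lam + (1 - lam) = 1)
    simp only [smul_eq_mul] at e1 e2
    rw [← hu] at e1
    rw [← hv] at e2
    rw [← hst]
    linarith

lemma fkg_Vsub {V : ℝ → ℝ} (hV : ConvexOn ℝ Set.univ V) (a a' b b' : ℝ) :
    V (max a a' - max b b') + V (min a a' - min b b') ≤ V (a - b) + V (a' - b') := by
  set s := a - b
  set t := a' - b'
  set u := max a a' - max b b'
  set v := min a a' - min b b'
  have huv : u + v = s + t := by
    have h1 : max a a' + min a a' = a + a' := max_add_min a a'
    have h2 : max b b' + min b b' = b + b' := max_add_min b b'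
    simp only [u, v, s, t]
    linarith
  have h2 : u ≤ max s t := by
    rcases le_total a a' with h | h
    · have : u = a' - max b b' := by simp only [u, max_eq_right h]
      have : u ≤ t := by rw [this]; have := le_max_right b b'; simp only [t]; linarith
      exact this.trans (le_max_right s t)
    · have : u = a - max b b' := by simp only [u, max_eq_left h]
      have : u ≤ s := by rw [this]; have := le_max_left b b'; simp only [s]; linarith
      exact this.trans (le_max_left s t)
  have h1 : min s t ≤ u := by
    rcases le_total b b' with h | h
    · have hu : u = max a a' - b' := by simp only [u, max_eq_right h]
      have : t ≤ u := by rw [hu]; have := le_max_right a a'; simp only [t]; linarith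
      exact (min_le_right s t).trans this
    · have hu : u = max a a' - b := by simp only [u, max_eq_left h]
      have : s ≤ u := by rw [hu]; have := le_max_left a a'; simp only [s]; linarith
      exact (min_le_left s t).trans this
  exact fkg_convex_pair hV huv h1 h2

lemma fkg_conf_measurable (N : ℕ) : Measurable (conf N) := by
  rw [measurable_pi_iff]
  intro k
  by_cases h : 1 ≤ k ∧ k ≤ N - 1
  · simp only [conf, dif_pos h]
    exact measurable_pi_apply _
  · simp only [conf, dif_neg h]
    exact measurable_const

lemma fkg_conf_sup (N : ℕ) (x y : Fin (N - 1) → ℝ) (k : ℕ) :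
    conf N (x ⊔ y) k = max (conf N x k) (conf N y k) := by
  simp only [conf]
  split_ifs with h
  · rfl
  · simp

lemma fkg_conf_inf (N : ℕ) (x y : Fin (N - 1) → ℝ) (k : ℕ) :
    conf N (x ⊓ y) k = min (conf N x k) (conf N y k) := by
  simp only [conf]
  split_ifs with h
  · rfl
  · simp

lemma fkg_ham_sub {V : ℝ → ℝ} (hV : ConvexOn ℝ Set.univ V) (N : ℕ) (x y : Fin (N - 1) → ℝ) :
    Ham V N (conf N (x ⊔ y)) + Ham V N (conf N (x ⊓ y)) ≤
      Ham V N (conf N x) + Ham V N (conf N y) := by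
  unfold Ham
  rw [← Finset.sum_add_distrib, ← Finset.sum_add_distrib]
  apply Finset.sum_le_sum
  intro k _
  have h := fkg_Vsub hV (conf N x (k + 1)) (conf N y (k + 1)) (conf N x k) (conf N y k)
  rw [fkg_conf_sup, fkg_conf_sup, fkg_conf_inf, fkg_conf_inf]
  exact h

/-- **FKG inequality for the interface measure.** For `V ∈ 𝒞`, `N ≥ 2`, and bounded measurable
functions `f, g` that are increasing w.r.t. the coordinatewise partial order on the coordinates
`0,…,N`, one has `π_N(fg) ≥ π_N(f) π_N(g)`. -/
theorem fkg_inequality (V : ℝ → ℝ) (hV : InClassC V) (N : ℕ) (hN : 2 ≤ N)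
    (f g : (ℕ → ℝ) → ℝ) (hf : Measurable f) (hg : Measurable g)
    (hfb : ∃ M : ℝ, ∀ x, |f x| ≤ M) (hgb : ∃ M : ℝ, ∀ x, |g x| ≤ M)
    (hfm : ∀ x y : ℕ → ℝ, (∀ k ≤ N, x k ≤ y k) → f x ≤ f y)
    (hgm : ∀ x y : ℕ → ℝ, (∀ k ≤ N, x k ≤ y k) → g x ≤ g y) :
    (∫ x, f x ∂piN V N) * (∫ x, g x ∂piN V N) ≤ ∫ x, f x * g x ∂piN V N := by
  classical
  obtain ⟨Mf, hMf⟩ := hfb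
  obtain ⟨Mg, hMg⟩ := hgb
  have hMf0 : 0 ≤ Mf := (abs_nonneg _).trans (hMf fun _ => 0)
  have hMg0 : 0 ≤ Mg := (abs_nonneg _).trans (hMg fun _ => 0)
  have hconf : Measurable (conf N) := fkg_conf_measurable N
  have hVcont : Continuous V := by
    have := hV.convex.continuousOn isOpen_univ
    rwa [continuousOn_univ] at this
  have hHam0 : Measurable (Ham V N) := by
    unfold Ham
    apply Finset.measurable_sum
    intro k _
    exact hVcont.measurable.comp
      ((measurable_pi_apply (k + 1)).sub (measurable_pi_apply k))
  have hHam : Measurable fun y : Fin (N - 1) → ℝ => Ham V N (conf N y) := hHam0.comp hconf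
  set ρ : (Fin (N - 1) → ℝ) → ℝ := fun y => Real.exp (-(Ham V N (conf N y))) with hρdef
  have hρm : Measurable ρ := hHam.neg.exp
  have hZeq : Zpart V N = ∫ y : Fin (N - 1) → ℝ, ρ y := rfl
  have hZnn : 0 ≤ Zpart V N := by
    rw [hZeq]; exact integral_nonneg fun y => (Real.exp_pos _).le
  have hwnn : ∀ y : Fin (N - 1) → ℝ, 0 ≤ ρ y / Zpart V N :=
    fun y => div_nonneg (Real.exp_pos _).le hZnn
  have hrepr : ∀ φ : (ℕ → ℝ) → ℝ, Measurable φ →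
      ∫ x, φ x ∂piN V N = ∫ y : Fin (N - 1) → ℝ, φ (conf N y) * (ρ y / Zpart V N) := by
    intro φ hφ
    rw [piN, integral_map hconf.aemeasurable hφ.aestronglyMeasurable]
    have hden : (fun y : Fin (N - 1) → ℝ =>
        ENNReal.ofReal (Real.exp (-(Ham V N (conf N y))) / Zpart V N))
        = fun y : Fin (N - 1) → ℝ => ((Real.toNNReal (ρ y / Zpart V N) : ℝ≥0) : ℝ≥0∞) := rfl
    rw [hden, integral_withDensity_eq_integral_smul ((hρm.div_const _).real_toNNReal) _]
    congr 1
    funext y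
    rw [NNReal.smul_def, Real.coe_toNNReal _ (hwnn y), smul_eq_mul, mul_comm]
  rw [hrepr f hf, hrepr g hg, hrepr (fun x => f x * g x) (hf.mul hg)]
  by_cases hint : Integrable ρ (volume : Measure (Fin (N - 1) → ℝ))
  swap
  · have hZ0 : Zpart V N = 0 := by rw [hZeq]; exact integral_undef hint
    simp [hZ0, div_zero]
  -- main case
  have hvolne : NeZero (volume : Measure (Fin (N - 1) → ℝ)) := by
    refine ⟨?_⟩
    intro h0
    have h1 : (volume : Measure (Fin (N - 1) → ℝ)) Set.univ ≠ 0 := by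
      rw [volume_pi, Measure.pi_univ, Finset.prod_const]
      exact pow_ne_zero _ (by simp [Real.volume_univ])
    rw [h0] at h1
    simp at h1
  have hZpos : 0 < Zpart V N := by
    rw [hZeq]
    exact integral_exp_pos hint
  set Z : ℝ := Zpart V N with hZdef
  set w : (Fin (N - 1) → ℝ) → ℝ := fun y => ρ y / Z with hwdef
  have hwm : Measurable w := hρm.div_const _
  have hw_int : Integrable w := hint.div_const _
  have hw_nn : ∀ y, 0 ≤ w y := hwnn
  have hw_total : ∫ y : Fin (N - 1) → ℝ, w y = 1 := by
    rw [hwdef]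
    simp only
    rw [integral_div, ← hZeq]
    exact div_self hZpos.ne'
  set F0 : (Fin (N - 1) → ℝ) → ℝ := fun y => f (conf N y) with hF0def
  set G0 : (Fin (N - 1) → ℝ) → ℝ := fun y => g (conf N y) with hG0def
  have hF0m : Measurable F0 := hf.comp hconf
  have hG0m : Measurable G0 := hg.comp hconf
  have hF0b : ∀ y, |F0 y| ≤ Mf := fun y => hMf _
  have hG0b : ∀ y, |G0 y| ≤ Mg := fun y => hMg _
  have hconfmono : ∀ x y : Fin (N - 1) → ℝ, ∀ k ≤ N, conf N x k ≤ conf N (x ⊔ y) k := by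
    intro x y k _
    rw [fkg_conf_sup]
    exact le_max_left _ _
  have hconfmono' : ∀ x y : Fin (N - 1) → ℝ, ∀ k ≤ N, conf N y k ≤ conf N (x ⊔ y) k := by
    intro x y k _
    rw [fkg_conf_sup]
    exact le_max_right _ _
  have hF0mono : ∀ x y : Fin (N - 1) → ℝ, F0 x ≤ F0 (x ⊔ y) :=
    fun x y => hfm _ _ (hconfmono x y)
  have hG0mono : ∀ x y : Fin (N - 1) → ℝ, G0 y ≤ G0 (x ⊔ y) :=
    fun x y => hgm _ _ (hconfmono' x y)
  set F : (Fin (N - 1) → ℝ) → ℝ := fun y => F0 y + Mf with hFdef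
  set G : (Fin (N - 1) → ℝ) → ℝ := fun y => G0 y + Mg with hGdef
  have hFm : Measurable F := hF0m.add_const _
  have hGm : Measurable G := hG0m.add_const _
  have hFnn : ∀ y, 0 ≤ F y := by
    intro y
    have := (abs_le.1 (hF0b y)).1
    simp only [hFdef]
    linarith
  have hGnn : ∀ y, 0 ≤ G y := by
    intro y
    have := (abs_le.1 (hG0b y)).1
    simp only [hGdef]
    linarith
  have hFb : ∀ y, ‖F y‖ ≤ Mf + Mf := by
    intro y
    rw [Real.norm_eq_abs]
    have h1 := (abs_le.1 (hF0b y)).2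
    have h2 := hFnn y
    rw [abs_of_nonneg h2]
    simp only [hFdef]
    linarith
  have hGb : ∀ y, ‖G y‖ ≤ Mg + Mg := by
    intro y
    rw [Real.norm_eq_abs]
    have h1 := (abs_le.1 (hG0b y)).2
    have h2 := hGnn y
    rw [abs_of_nonneg h2]
    simp only [hGdef]
    linarith
  have hww : ∀ x y : Fin (N - 1) → ℝ, w x * w y ≤ w (x ⊔ y) * w (x ⊓ y) := by
    intro x y
    have hZZ : (0 : ℝ) < Z * Z := mul_pos hZpos hZpos
    have hnum : ρ x * ρ y ≤ ρ (x ⊔ y) * ρ (x ⊓ y) := by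
      simp only [hρdef]
      rw [← Real.exp_add, ← Real.exp_add]
      apply Real.exp_le_exp.2
      have := fkg_ham_sub hV.convex N x y
      linarith
    simp only [hwdef]
    rw [div_mul_div_comm, div_mul_div_comm]
    exact (div_le_div_iff_of_pos_right hZZ).2 hnum
  -- integrabilities
  have hFw_int : Integrable (fun y => F y * w y) :=
    hw_int.bdd_mul hFm.aestronglyMeasurable (Filter.Eventually.of_forall hFb)
  have hGw_int : Integrable (fun y => G y * w y) :=
    hw_int.bdd_mul hGm.aestronglyMeasurable (Filter.Eventually.of_forall hGb)
  have hFGw_int : Integrable (fun y => F y * G y * w y) := by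
    refine hw_int.bdd_mul (hFm.mul hGm).aestronglyMeasurable (c := (Mf + Mf) * (Mg + Mg)) (Filter.Eventually.of_forall ?_)
    intro y
    rw [Real.norm_eq_abs, abs_mul]
    exact mul_le_mul ((Real.norm_eq_abs _) ▸ hFb y) ((Real.norm_eq_abs _) ▸ hGb y)
      (abs_nonneg _) (by linarith)
  have hF0w_int : Integrable (fun y => F0 y * w y) := by
    refine hw_int.bdd_mul hF0m.aestronglyMeasurable (c := Mf) (Filter.Eventually.of_forall ?_)
    intro y; rw [Real.norm_eq_abs]; exact hF0b y
  have hG0w_int : Integrable (fun y => G0 y * w y) := by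
    refine hw_int.bdd_mul hG0m.aestronglyMeasurable (c := Mg) (Filter.Eventually.of_forall ?_)
    intro y; rw [Real.norm_eq_abs]; exact hG0b y
  have hF0G0w_int : Integrable (fun y => F0 y * G0 y * w y) := by
    refine hw_int.bdd_mul (hF0m.mul hG0m).aestronglyMeasurable (c := Mf * Mg) (Filter.Eventually.of_forall ?_)
    intro y
    rw [Real.norm_eq_abs, abs_mul]
    exact mul_le_mul (hF0b y) (hG0b y) (abs_nonneg _) hMf0
  -- apply the four functions machinery
  have key := fkg_dim (N - 1)
    (fun y => ENNReal.ofReal (F y * w y))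
    (fun y => ENNReal.ofReal (G y * w y))
    (fun y => ENNReal.ofReal (F y * G y * w y))
    (fun y => ENNReal.ofReal (w y))
    ((hFm.mul hwm).ennreal_ofReal)
    ((hGm.mul hwm).ennreal_ofReal)
    (((hFm.mul hGm).mul hwm).ennreal_ofReal)
    (hwm.ennreal_ofReal)
    (by
      intro x y
      rw [← ENNReal.ofReal_mul (mul_nonneg (hFnn x) (hw_nn x)),
        ← ENNReal.ofReal_mul (mul_nonneg (mul_nonneg (hFnn (x ⊔ y)) (hGnn (x ⊔ y))) (hw_nn (x ⊔ y)))]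
      apply ENNReal.ofReal_le_ofReal
      have h1 : F x * G y ≤ F (x ⊔ y) * G (x ⊔ y) := by
        have hFx : F x ≤ F (x ⊔ y) := by
          simp only [hFdef]
          have := hF0mono x y
          linarith
        have hGy : G y ≤ G (x ⊔ y) := by
          simp only [hGdef]
          have := hG0mono x y
          linarith
        exact mul_le_mul hFx hGy (hGnn y) (hFnn _)
      calc F x * w x * (G y * w y) = (F x * G y) * (w x * w y) := by ring
        _ ≤ (F (x ⊔ y) * G (x ⊔ y)) * (w (x ⊔ y) * w (x ⊓ y)) :=
            mul_le_mul h1 (hww x y) (mul_nonneg (hw_nn x) (hw_nn y))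
              (mul_nonneg (hFnn _) (hGnn _))
        _ = F (x ⊔ y) * G (x ⊔ y) * w (x ⊔ y) * w (x ⊓ y) := by ring)
  -- convert back to real integrals
  have cα : ENNReal.ofReal (∫ y, F y * w y) = ∫⁻ y, ENNReal.ofReal (F y * w y) :=
    ofReal_integral_eq_lintegral_ofReal hFw_int
      (Filter.Eventually.of_forall fun y => mul_nonneg (hFnn y) (hw_nn y))
  have cβ : ENNReal.ofReal (∫ y, G y * w y) = ∫⁻ y, ENNReal.ofReal (G y * w y) :=
    ofReal_integral_eq_lintegral_ofReal hGw_int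
      (Filter.Eventually.of_forall fun y => mul_nonneg (hGnn y) (hw_nn y))
  have cγ : ENNReal.ofReal (∫ y, F y * G y * w y) = ∫⁻ y, ENNReal.ofReal (F y * G y * w y) :=
    ofReal_integral_eq_lintegral_ofReal hFGw_int
      (Filter.Eventually.of_forall fun y =>
        mul_nonneg (mul_nonneg (hFnn y) (hGnn y)) (hw_nn y))
  have cδ : ENNReal.ofReal (∫ y, w y) = ∫⁻ y, ENNReal.ofReal (w y) :=
    ofReal_integral_eq_lintegral_ofReal hw_int
      (Filter.Eventually.of_forall hw_nn)
  have hFwnn : 0 ≤ ∫ y, F y * w y :=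
    integral_nonneg fun y => mul_nonneg (hFnn y) (hw_nn y)
  have hGwnn : 0 ≤ ∫ y, G y * w y :=
    integral_nonneg fun y => mul_nonneg (hGnn y) (hw_nn y)
  have hFGwnn : 0 ≤ ∫ y, F y * G y * w y :=
    integral_nonneg fun y => mul_nonneg (mul_nonneg (hFnn y) (hGnn y)) (hw_nn y)
  have hwInn : 0 ≤ ∫ y, w y := integral_nonneg hw_nn
  have hmain : (∫ y, F y * w y) * (∫ y, G y * w y) ≤
      (∫ y, F y * G y * w y) * ∫ y, w y := by
    have hRHSnn : 0 ≤ (∫ y, F y * G y * w y) * ∫ y, w y := mul_nonneg hFGwnn hwInn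
    refine (ENNReal.ofReal_le_ofReal_iff hRHSnn).1 ?_
    rw [ENNReal.ofReal_mul hFwnn, ENNReal.ofReal_mul hFGwnn, cα, cβ, cγ, cδ]
    exact key
  -- expand the shifted functions
  have ea : ∫ y, F y * w y = (∫ y, F0 y * w y) + Mf := by
    have hfe : (fun y : Fin (N - 1) → ℝ => F y * w y)
        = fun y => F0 y * w y + Mf * w y := by
      funext y; simp only [hFdef]; ring
    rw [hfe, integral_add hF0w_int (hw_int.const_mul Mf), integral_const_mul, hw_total, mul_one]
  have eb : ∫ y, G y * w y = (∫ y, G0 y * w y) + Mg := by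
    have hge : (fun y : Fin (N - 1) → ℝ => G y * w y)
        = fun y => G0 y * w y + Mg * w y := by
      funext y; simp only [hGdef]; ring
    rw [hge, integral_add hG0w_int (hw_int.const_mul Mg), integral_const_mul, hw_total, mul_one]
  have ec : ∫ y, F y * G y * w y = (∫ y, F0 y * G0 y * w y)
      + Mg * (∫ y, F0 y * w y) + (Mf * (∫ y, G0 y * w y) + Mf * Mg) := by
    have hce : (fun y : Fin (N - 1) → ℝ => F y * G y * w y)
        = fun y => (F0 y * G0 y * w y + Mg * (F0 y * w y))
            + (Mf * (G0 y * w y) + (Mf * Mg) * w y) := by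
      funext y; simp only [hFdef, hGdef]; ring
    have iA : Integrable (fun y => F0 y * G0 y * w y + Mg * (F0 y * w y)) volume :=
      hF0G0w_int.add (hF0w_int.const_mul Mg)
    have iB : Integrable (fun y => Mf * (G0 y * w y) + Mf * Mg * w y) volume :=
      (hG0w_int.const_mul Mf).add (hw_int.const_mul (Mf * Mg))
    rw [hce, integral_add iA iB,
      integral_add hF0G0w_int (hF0w_int.const_mul Mg),
      integral_add (hG0w_int.const_mul Mf) (hw_int.const_mul (Mf * Mg)),
      integral_const_mul, integral_const_mul, integral_const_mul, hw_total, mul_one]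
  rw [ea, eb, ec, hw_total, mul_one] at hmain
  nlinarith [hmain]


end
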